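/- Fix an integer d ≥ 1 and k ∈ ℕ, and let k_d = (k, k, …, k) ∈ U_d be the constant tuple. Then there exists m ∈ ℕ such that succ_d^[m](0_d) = k_d, and this m satisfies k^d ≤ d!·m and m ≤ (k + 1)^d; moreover max over 0 ≤ j ≤ m of |succ_d^[j](0_d)|₁ equals d·k. -/

import Mathlib

namespace CounterValues

/-- Successor on reversed tuples (last coordinate first): increment the first entry if it is
strictly below the next one, otherwise zero it and recurse on the tail. -/
def rsucc : List ℕ → List ℕ
  | [] => []
  | [i] => [i + 1]
  | i :: j :: rest => if i < j then (i + 1) :: j :: rest else 0 :: rsucc (j :: rest)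

/-- The successor function `succ_d` on tuples `(i₁, …, i_d)` (written in natural order):
increment the last coordinate if it is strictly smaller than the previous one, otherwise
zero it and apply the successor to the prefix. -/
def succd (l : List ℕ) : List ℕ := (rsucc l.reverse).reverse

/-- The all-zero tuple `0_d`. -/
def zeroTuple (d : ℕ) : List ℕ := List.replicate d 0

/-- Condition that `k` is at most the head of `tail` (or `tail` is empty). -/
def Ok (k : ℕ) : List ℕ → Prop
  | [] => True
  | t :: _ => k ≤ t

lemma rsucc_const : ∀ (d v : ℕ), rsucc (List.replicate (d+1) v) = List.replicate d 0 ++ [v+1]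
  | 0, v => by simp [rsucc, List.replicate_succ]
  | d+1, v => by
    rw [List.replicate_succ, List.replicate_succ (n := d)]
    show rsucc (v :: v :: List.replicate d v) = _
    rw [rsucc, if_neg (lt_irrefl v)]
    rw [← List.replicate_succ, rsucc_const d v, List.replicate_succ]
    simp

lemma rsucc_const_cons : ∀ (d v t : ℕ) (ts : List ℕ), v < t →
    rsucc (List.replicate (d+1) v ++ t :: ts) = List.replicate d 0 ++ (v+1) :: t :: ts
  | 0, v, t, ts, h => by simp [rsucc, if_pos h]
  | d+1, v, t, ts, h => by
    have ih := rsucc_const_cons d v t ts h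
    have e : List.replicate (d+1+1) v ++ t :: ts
        = v :: v :: (List.replicate d v ++ t :: ts) := by
      simp [List.replicate_succ]
    rw [e, rsucc, if_neg (lt_irrefl v)]
    have e2 : v :: (List.replicate d v ++ t :: ts) = List.replicate (d+1) v ++ t :: ts := by
      simp [List.replicate_succ]
    rw [e2, ih]
    simp [List.replicate_succ]

lemma main_lemma : ∀ (d k : ℕ) (tail : List ℕ), Ok k tail →
    rsucc^[(k+d).choose d - 1] (List.replicate d 0 ++ tail) = List.replicate d k ++ tail ∧
    ∀ j ≤ (k+d).choose d - 1,
      (rsucc^[j] (List.replicate d 0 ++ tail)).sum ≤ d * k + tail.sum := by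
  intro d
  induction d with
  | zero =>
    intro k tail _
    simp
  | succ d ihd =>
    intro k
    induction k with
    | zero =>
      intro tail _
      simp
    | succ k ihk =>
      intro tail hOk
      have hOk' : Ok k tail := by cases tail with
        | nil => trivial
        | cons t ts => exact le_trans (Nat.le_succ k) hOk
      have hX : 0 < (k+d+1).choose (d+1) := Nat.choose_pos (by omega)
      have hY : 0 < (k+d+1).choose d := Nat.choose_pos (by omega)
      obtain ⟨a, ha⟩ : ∃ a, (k+d+1).choose (d+1) = a + 1 :=
        ⟨_, (Nat.succ_pred_eq_of_pos hX).symm⟩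
      obtain ⟨b, hb⟩ : ∃ b, (k+d+1).choose d = b + 1 :=
        ⟨_, (Nat.succ_pred_eq_of_pos hY).symm⟩
      have em₁ : (k+(d+1)).choose (d+1) - 1 = a := by
        rw [show k+(d+1) = k+d+1 from rfl, ha]; omega
      have em₂ : (k+1+d).choose d - 1 = b := by
        rw [show k+1+d = k+d+1 by omega, hb]; omega
      have hpas : (k+1+(d+1)).choose (d+1)
          = (k+d+1).choose d + (k+d+1).choose (d+1) := by
        rw [show k+1+(d+1) = (k+d+1)+1 by omega]
        exact Nat.choose_succ_succ' _ _
      have em : (k+1+(d+1)).choose (d+1) - 1 = b + 1 + a := by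
        rw [hpas, ha, hb]; omega
      obtain ⟨e1, s1⟩ := ihk tail hOk'
      rw [em₁] at e1 s1
      obtain ⟨e3, s3⟩ := ihd (k+1) ((k+1) :: tail) (le_refl (k+1))
      rw [em₂] at e3 s3
      have e2 : rsucc (List.replicate (d+1) k ++ tail)
          = List.replicate d 0 ++ (k+1) :: tail := by
        cases tail with
        | nil => rw [List.append_nil, rsucc_const]
        | cons t ts => exact rsucc_const_cons d k t ts (by exact hOk)
      have e3' : rsucc^[b] (List.replicate d 0 ++ (k+1) :: tail)
          = List.replicate (d+1) (k+1) ++ tail := by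
        rw [e3, List.replicate_succ' (n := d) (a := k+1)]
        simp
      rw [em]
      constructor
      · rw [Function.iterate_add_apply, e1, Function.iterate_succ_apply, e2, e3']
      · intro j hj
        rcases le_or_gt j a with hjm | hjm
        · calc (rsucc^[j] (List.replicate (d+1) 0 ++ tail)).sum
              ≤ (d+1) * k + tail.sum := s1 j hjm
            _ ≤ (d+1) * (k+1) + tail.sum := by
                have : (d+1) * k ≤ (d+1) * (k+1) := Nat.mul_le_mul_left _ (Nat.le_succ k)
                omega
        · have hj' : j = (j - (a + 1)) + (a + 1) := by omega
          have hj2 : j - (a + 1) ≤ b := by omega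
          rw [hj', Function.iterate_add_apply, Function.iterate_succ_apply', e1, e2]
          calc (rsucc^[j - (a+1)] (List.replicate d 0 ++ (k+1) :: tail)).sum
              ≤ d * (k+1) + ((k+1) :: tail).sum := s3 _ hj2
            _ ≤ (d+1) * (k+1) + tail.sum := by
                rw [List.sum_cons, Nat.succ_mul]
                omega

lemma succd_iterate : ∀ (n : ℕ) (l : List ℕ),
    succd^[n] l = (rsucc^[n] l.reverse).reverse := by
  intro n
  induction n with
  | zero => simp
  | succ n ih =>
    intro l
    rw [Function.iterate_succ_apply', Function.iterate_succ_apply', ih, succd]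
    simp

lemma asc_lower : ∀ (d k : ℕ), 1 ≤ d → k ^ d + d.factorial ≤ (k+1).ascFactorial d := by
  intro d
  induction d with
  | zero => intro k h; omega
  | succ d ih =>
    intro k _
    rcases Nat.eq_zero_or_pos d with hd | hd
    · subst hd
      simp [Nat.ascFactorial]
    · have h := ih k hd
      rw [Nat.ascFactorial_succ]
      calc k ^ (d+1) + (d+1).factorial
          ≤ (k + 1 + d) * (k ^ d + d.factorial) := by
            rw [Nat.factorial_succ]
            have h1 : k ^ (d+1) = k * k ^ d := by ring
            have h2 : (k + 1 + d) * (k ^ d + d.factorial)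
                = k * k ^ d + k ^ d + d * k ^ d + (k + 1 + d) * d.factorial := by ring
            have h3 : (d+1) * d.factorial ≤ (k + 1 + d) * d.factorial :=
              Nat.mul_le_mul_right _ (by omega)
            omega
        _ ≤ (k + 1 + d) * (k+1).ascFactorial d := Nat.mul_le_mul_left _ h

lemma asc_upper : ∀ (d k : ℕ), (k+1).ascFactorial d ≤ d.factorial * (k+1) ^ d := by
  intro d
  induction d with
  | zero => intro k; simp
  | succ d ih =>
    intro k
    rw [Nat.ascFactorial_succ, Nat.factorial_succ]
    calc (k + 1 + d) * (k+1).ascFactorial d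
        ≤ (k + 1 + d) * (d.factorial * (k+1) ^ d) := Nat.mul_le_mul_left _ (ih k)
      _ ≤ ((d+1) * (k+1)) * (d.factorial * (k+1) ^ d) := by
          apply Nat.mul_le_mul_right
          have : (d+1) * (k+1) = d*k + d + k + 1 := by ring
          omega
      _ = (d+1) * d.factorial * (k+1) ^ (d+1) := by ring

/-- The constant tuple `k_d = (k, …, k)` is reached from `0_d` after `m` steps, where
`k^d ≤ d!·m`, `m ≤ (k+1)^d`, and the maximal ℓ¹-norm along the way equals `d·k`. -/
theorem reach_constant_tuple (d k : ℕ) (hd : 1 ≤ d) :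
    ∃ m : ℕ, succd^[m] (zeroTuple d) = List.replicate d k ∧
      k ^ d ≤ Nat.factorial d * m ∧ m ≤ (k + 1) ^ d ∧
      (Finset.range (m + 1)).sup (fun j => (succd^[j] (zeroTuple d)).sum) = d * k := by
  have hzrev : (zeroTuple d).reverse = List.replicate d 0 := by
    simp [zeroTuple, List.reverse_replicate]
  have hC : 0 < (k+d).choose d := Nat.choose_pos (by omega)
  obtain ⟨c, hc⟩ : ∃ c, (k+d).choose d = c + 1 :=
    ⟨(k+d).choose d - 1, (Nat.succ_pred_eq_of_pos hC).symm⟩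
  have hm : (k+d).choose d - 1 = c := by omega
  have hasc : (k+1).ascFactorial d = d.factorial * (k+d).choose d :=
    Nat.ascFactorial_eq_factorial_mul_choose k d
  refine ⟨c, ?_, ?_, ?_, ?_⟩
  case _ =>
    rw [succd_iterate]
    have h := (main_lemma d k [] trivial).1
    simp only [List.append_nil] at h
    rw [hzrev, ← hm, h]
    simp [List.reverse_replicate]
  case _ =>
    have hlow := asc_lower d k hd
    rw [hasc, hc, Nat.mul_succ] at hlow
    omega
  case _ =>
    have hup := asc_upper d k
    rw [hasc] at hup
    have : (k+d).choose d ≤ (k+1) ^ d :=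
      Nat.le_of_mul_le_mul_left hup (Nat.factorial_pos d)
    omega
  case _ =>
    have heq : succd^[c] (zeroTuple d) = List.replicate d k := by
      rw [succd_iterate]
      have h := (main_lemma d k [] trivial).1
      simp only [List.append_nil] at h
      rw [hzrev, ← hm, h]
      simp [List.reverse_replicate]
    apply le_antisymm
    · refine Finset.sup_le ?_
      intro j hj
      rw [Finset.mem_range] at hj
      have h := (main_lemma d k [] trivial).2 j (by omega)
      simp only [List.append_nil, List.sum_nil, add_zero] at h
      rw [succd_iterate, List.sum_reverse, hzrev]
      exact h
    · have hmem : c ∈ Finset.range (c+1) := Finset.mem_range.mpr (Nat.lt_succ_self c)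
      have h := Finset.le_sup (f := fun j => (succd^[j] (zeroTuple d)).sum) hmem
      simp only [heq] at h
      simpa [List.sum_replicate, smul_eq_mul] using h

end CounterValues
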